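/- Let c : ℝⁿ → ℝᵐ and g : ℝⁿ → ℝᵏ be continuously differentiable, f locally Lipschitz, and x a point with g_j(x) = 0 for j in an index set 𝒥. Suppose 0 ∈ ∂f(x) + ∇c(x)ℝᵐ + ∇g_𝒥(x)ℝ^{|𝒥|} (x is in the stable set) but 0 ∉ ∂f(x) + ∇c(x)ℝᵐ + ∇g_𝒥(x)ℝ₊^{|𝒥|} (x is not a KKT point). Then there exists u ∈ ℝⁿ with ∇c(x)ᵀu = 0, ⟨u, ∇g_j(x)⟩ ≤ 0 for all j ∈ 𝒥, and ⟨u, d⟩ < 0 for all d ∈ ∂f(x). -/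

import Mathlib

open Matrix Filter Topology

lemma aux_isCompact_convexHull {n : ℕ} {s : Set (Fin n → ℝ)} (hs : IsCompact s) :
    IsCompact (convexHull ℝ s) := by
  classical
  rcases s.eq_empty_or_nonempty with rfl | ⟨x₀, hx₀⟩
  · simpa using isCompact_empty
  have himg : convexHull ℝ s =
      (fun p : (Fin (n+1) → ℝ) × (Fin (n+1) → Fin n → ℝ) => ∑ i, p.1 i • p.2 i) ''
        (stdSimplex ℝ (Fin (n+1)) ×ˢ Set.pi Set.univ fun _ => s) := by
    apply Set.Subset.antisymm
    · intro y hy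
      obtain ⟨ι, hι, z, w, hzs, hind, hwpos, hwsum, hwz⟩ :=
        eq_pos_convex_span_of_mem_convexHull hy
      have hcard : Fintype.card ι ≤ n + 1 := by
        have h1 := hind.card_le_finrank_succ
        have h2 : Module.finrank ℝ (vectorSpan ℝ (Set.range z)) ≤
            Module.finrank ℝ (Fin n → ℝ) := Submodule.finrank_le _
        have h3 : Module.finrank ℝ (Fin n → ℝ) = n := Module.finrank_fin_fun ℝ
        omega
      obtain ⟨e⟩ : Nonempty (ι ↪ Fin (n+1)) :=
        Function.Embedding.nonempty_of_card_le (by simpa using hcard)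
      set w' : Fin (n+1) → ℝ := fun j => ∑ i ∈ Finset.univ.filter (fun i => e i = j), w i
        with hw'
      set z' : Fin (n+1) → Fin n → ℝ :=
        fun j => if h : ∃ i, e i = j then z h.choose else x₀ with hz'
      have hz'e : ∀ i : ι, z' (e i) = z i := by
        intro i
        have h : ∃ i', e i' = e i := ⟨i, rfl⟩
        simp only [hz', dif_pos h]
        exact congrArg z (e.injective h.choose_spec)
      refine ⟨(w', z'), ⟨⟨fun j => Finset.sum_nonneg fun i _ => (hwpos i).le, ?_⟩,
        fun j _ => ?_⟩, ?_⟩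
      · rw [hw', ← hwsum]
        exact Finset.sum_fiberwise _ _ _
      · by_cases h : ∃ i, e i = j
        · simp only [hz', dif_pos h]; exact hzs ⟨h.choose, rfl⟩
        · simp only [hz', dif_neg h]; exact hx₀
      · rw [← hwz]
        calc (∑ j, w' j • z' j)
            = ∑ j, ∑ i ∈ Finset.univ.filter fun i => e i = j, w i • z i := by
              refine Finset.sum_congr rfl fun j _ => ?_
              rw [hw', Finset.sum_smul]
              refine Finset.sum_congr rfl fun i hi => ?_
              have hj := (Finset.mem_filter.mp hi).2
              rw [← hj, hz'e]
          _ = ∑ i, w i • z i := Finset.sum_fiberwise _ _ _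
    · rintro y ⟨⟨w, z⟩, ⟨⟨hw0, hw1⟩, hzmem⟩, rfl⟩
      exact (convex_convexHull ℝ s).sum_mem (fun i _ => hw0 i) hw1
        fun i _ => subset_convexHull ℝ s (hzmem i (Set.mem_univ i))
  rw [himg]
  exact ((isCompact_stdSimplex ℝ _).prod (isCompact_univ_pi fun _ => hs)).image
    (continuous_finset_sum _ fun i _ =>
      ((continuous_apply i).comp continuous_fst).smul ((continuous_apply i).comp continuous_snd))

noncomputable def clarkeSubdiff {n : ℕ} (f : (Fin n → ℝ) → ℝ) (x : Fin n → ℝ) :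
    Set (Fin n → ℝ) :=
  convexHull ℝ {v | ∃ u : ℕ → Fin n → ℝ, (∀ k, DifferentiableAt ℝ f (u k)) ∧
    Tendsto u atTop (𝓝 x) ∧
    ∀ w : Fin n → ℝ, Tendsto (fun k => fderiv ℝ f (u k) w) atTop (𝓝 (v ⬝ᵥ w))}

noncomputable def gradVec {n : ℕ} (φ : (Fin n → ℝ) → ℝ) (x : Fin n → ℝ) : Fin n → ℝ :=
  fun i => fderiv ℝ φ x (Pi.single i 1)

lemma aux_wrep {n : ℕ} (w : Fin n → ℝ) : w = ∑ i, w i • (Pi.single i 1 : Fin n → ℝ) := by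
  ext j
  simp [Finset.sum_apply, Pi.single_apply]

/-- If `x` is in the stable set
`0 ∈ ∂f(x) + ∇c(x)ℝᵐ + ∇g_𝒥(x)ℝ^{|𝒥|}` but is not a KKT point
(`0 ∉ ∂f(x) + ∇c(x)ℝᵐ + ∇g_𝒥(x)ℝ₊^{|𝒥|}`, the latter a closed convex cone), then there
is `u` with `∇c(x)ᵀu = 0`, `⟨u, ∇g_j(x)⟩ ≤ 0` for `j ∈ 𝒥`, and `⟨u, d⟩ < 0` on `∂f(x)`. -/
theorem stmt7 {n m k : ℕ} (f : (Fin n → ℝ) → ℝ) (hf : LocallyLipschitz f)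
    (c : (Fin n → ℝ) → Fin m → ℝ) (g : (Fin n → ℝ) → Fin k → ℝ)
    (hc : ContDiff ℝ 1 c) (hg : ContDiff ℝ 1 g)
    (x : Fin n → ℝ) (J : Set (Fin k)) (hJ : ∀ j ∈ J, g x j = 0)
    (hClosed : IsClosed {w : Fin n → ℝ | ∃ (μ : Fin m → ℝ) (lam : Fin k → ℝ),
      (∀ j, j ∉ J → lam j = 0) ∧ (∀ j, 0 ≤ lam j) ∧
      w = (∑ i, μ i • gradVec (fun y => c y i) x) +
          (∑ j, lam j • gradVec (fun y => g y j) x)})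
    (hStable : ∃ d ∈ clarkeSubdiff f x, ∃ (μ : Fin m → ℝ) (lam : Fin k → ℝ),
      (∀ j, j ∉ J → lam j = 0) ∧
      d + (∑ i, μ i • gradVec (fun y => c y i) x) +
          (∑ j, lam j • gradVec (fun y => g y j) x) = 0)
    (hNotKKT : ¬ ∃ d ∈ clarkeSubdiff f x, ∃ (μ : Fin m → ℝ) (lam : Fin k → ℝ),
      (∀ j, j ∉ J → lam j = 0) ∧ (∀ j, 0 ≤ lam j) ∧
      d + (∑ i, μ i • gradVec (fun y => c y i) x) +
          (∑ j, lam j • gradVec (fun y => g y j) x) = 0) :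
    ∃ u : Fin n → ℝ, (∀ i, gradVec (fun y => c y i) x ⬝ᵥ u = 0) ∧
      (∀ j ∈ J, u ⬝ᵥ gradVec (fun y => g y j) x ≤ 0) ∧
      ∀ d ∈ clarkeSubdiff f x, u ⬝ᵥ d < 0 := by
  classical
  obtain ⟨K, t, ht, hlip⟩ := hf x
  obtain ⟨ε, hε, hball⟩ := Metric.mem_nhds_iff.1 ht
  set S : Set (Fin n → ℝ) := {v | ∃ u : ℕ → Fin n → ℝ, (∀ k, DifferentiableAt ℝ f (u k)) ∧
    Tendsto u atTop (𝓝 x) ∧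
    ∀ w : Fin n → ℝ, Tendsto (fun k => fderiv ℝ f (u k) w) atTop (𝓝 (v ⬝ᵥ w))} with hSdef
  have hsub : clarkeSubdiff f x = convexHull ℝ S := rfl
  -- fderiv bound near x
  have hfd : ∀ y ∈ Metric.ball x ε, ‖fderiv ℝ f y‖ ≤ K := fun y hy =>
    norm_fderiv_le_of_lipschitzOn ℝ (Metric.isOpen_ball.mem_nhds hy) (hlip.mono hball)
  -- S is bounded
  have hvk : ∀ v ∈ S, ∀ w : Fin n → ℝ, |v ⬝ᵥ w| ≤ K * ‖w‖ := by
    rintro v ⟨u, hdiff, hux, hfder⟩ w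
    refine le_of_tendsto (hfder w).abs ?_
    filter_upwards [hux (Metric.ball_mem_nhds x hε)] with j hj
    calc |fderiv ℝ f (u j) w| ≤ ‖fderiv ℝ f (u j)‖ * ‖w‖ := (fderiv ℝ f (u j)).le_opNorm w
      _ ≤ K * ‖w‖ := mul_le_mul_of_nonneg_right (hfd _ hj) (norm_nonneg w)
  have hSsub : S ⊆ Metric.closedBall 0 K := by
    intro v hv
    rw [Metric.mem_closedBall, dist_zero_right]
    refine pi_norm_le_iff_of_nonneg K.coe_nonneg |>.2 fun i => ?_
    have h1 := hvk v hv (Pi.single i 1)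
    rw [dotProduct_single, mul_one] at h1
    have h2 : ‖(Pi.single i 1 : Fin n → ℝ)‖ ≤ 1 := by
      refine pi_norm_le_iff_of_nonneg zero_le_one |>.2 fun j => ?_
      rcases eq_or_ne j i with rfl | hji
      · simp
      · simp [Pi.single_eq_of_ne hji]
    calc ‖v i‖ = |v i| := rfl
      _ ≤ K * ‖(Pi.single i 1 : Fin n → ℝ)‖ := h1
      _ ≤ K * 1 := mul_le_mul_of_nonneg_left h2 K.coe_nonneg
      _ = K := mul_one _
  -- S is closed
  have hSclosed : IsClosed S := by
    refine IsSeqClosed.isClosed ?_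
    intro v v₀ hv hv0
    choose u hdiff hux hfder using hv
    have key : ∀ j : ℕ, ∃ N, dist (u j N) x < 1/(j+1) ∧
        ∀ i, |fderiv ℝ f (u j N) (Pi.single i 1) - v j ⬝ᵥ Pi.single i 1| < 1/(j+1) := by
      intro j
      have hpos : (0:ℝ) < 1/(j+1) := by positivity
      have h1 : ∀ᶠ N in atTop, dist (u j N) x < 1/(j+1) :=
        (hux j) (Metric.ball_mem_nhds x hpos)
      have h2 : ∀ᶠ N in atTop, ∀ i,
          |fderiv ℝ f (u j N) (Pi.single i 1) - v j ⬝ᵥ Pi.single i 1| < 1/(j+1) := by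
        rw [eventually_all]
        intro i
        have h3 := (hfder j (Pi.single i 1)) (Metric.ball_mem_nhds _ hpos)
        filter_upwards [h3] with N hN
        simpa [Real.dist_eq] using hN
      exact (h1.and h2).exists
    choose N hN1 hN2 using key
    have hlim : Tendsto (fun j : ℕ => 1/((j:ℝ)+1)) atTop (𝓝 0) :=
      tendsto_one_div_add_atTop_nhds_zero_nat
    have hcomp : ∀ i, Tendsto (fun j => fderiv ℝ f (u j (N j)) (Pi.single i 1)) atTop
        (𝓝 (v₀ ⬝ᵥ Pi.single i 1)) := by
      intro i
      have h1 : Tendsto (fun j => fderiv ℝ f (u j (N j)) (Pi.single i 1)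
          - v j ⬝ᵥ Pi.single i 1) atTop (𝓝 0) :=
        squeeze_zero_norm (fun j => (hN2 j i).le) hlim
      have h2 : Tendsto (fun j => v j ⬝ᵥ Pi.single i (1:ℝ)) atTop
          (𝓝 (v₀ ⬝ᵥ Pi.single i 1)) := by
        simp only [dotProduct_single, mul_one]
        exact (tendsto_pi_nhds.mp hv0) i
      simpa using h1.add h2
    refine ⟨fun j => u j (N j), fun j => hdiff j (N j), ?_, ?_⟩
    · rw [tendsto_iff_dist_tendsto_zero]
      exact squeeze_zero (fun j => dist_nonneg) (fun j => (hN1 j).le) hlim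
    · intro w
      have hw : ∀ j, fderiv ℝ f (u j (N j)) w
          = ∑ i, w i * fderiv ℝ f (u j (N j)) (Pi.single i 1) := by
        intro j
        conv_lhs => rw [aux_wrep w]
        rw [map_sum]
        exact Finset.sum_congr rfl fun i _ => by
          rw [_root_.map_smul, smul_eq_mul]
      have hvw : v₀ ⬝ᵥ w = ∑ i, w i * (v₀ ⬝ᵥ Pi.single i 1) := by
        simp only [dotProduct_single, mul_one, dotProduct_comm v₀ w]
        rfl
      simp only [hw, hvw]
      exact tendsto_finset_sum _ fun i _ => (hcomp i).const_mul (w i)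
  have hScompact : IsCompact S :=
    Metric.isCompact_of_isClosed_isBounded hSclosed
      (Metric.isBounded_closedBall.subset hSsub)
  have hhullcompact : IsCompact (clarkeSubdiff f x) := by
    rw [hsub]; exact aux_isCompact_convexHull hScompact
  have hhullconv : Convex ℝ (clarkeSubdiff f x) := convex_convexHull ℝ S
  -- the cone C
  set C : Set (Fin n → ℝ) := {w : Fin n → ℝ | ∃ (μ : Fin m → ℝ) (lam : Fin k → ℝ),
      (∀ j, j ∉ J → lam j = 0) ∧ (∀ j, 0 ≤ lam j) ∧
      w = (∑ i, μ i • gradVec (fun y => c y i) x) +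
          (∑ j, lam j • gradVec (fun y => g y j) x)} with hCdef
  have hCconv : Convex ℝ C := by
    rintro w1 ⟨μ1, l1, hl1, hl1', rfl⟩ w2 ⟨μ2, l2, hl2, hl2', rfl⟩ p q hp hq hpq
    refine ⟨p • μ1 + q • μ2, p • l1 + q • l2, fun j hj => by simp [hl1 j hj, hl2 j hj], ?_, ?_⟩
    · intro j
      have := hl1' j; have := hl2' j
      simp only [Pi.add_apply, Pi.smul_apply, smul_eq_mul]
      positivity
    · simp only [Pi.add_apply, Pi.smul_apply, smul_eq_mul, add_smul, mul_smul,
        Finset.sum_add_distrib, smul_add, Finset.smul_sum]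
      abel
  have hCcone : ∀ r : ℝ, 0 ≤ r → ∀ w ∈ C, r • w ∈ C := by
    rintro r hr w ⟨μ, l, h1, h2, rfl⟩
    refine ⟨r • μ, r • l, fun j hj => by simp [h1 j hj], fun j => mul_nonneg hr (h2 j), ?_⟩
    simp only [smul_add, Finset.smul_sum, smul_smul, Pi.smul_apply, smul_eq_mul]
  have hCzero : (0 : Fin n → ℝ) ∈ C :=
    ⟨0, 0, fun j _ => rfl, fun j => le_refl 0, by simp⟩
  -- disjointness
  have hdisj : Disjoint (clarkeSubdiff f x) (-C) := by
    rw [Set.disjoint_left]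
    intro d hd hdC
    rw [Set.mem_neg] at hdC
    obtain ⟨μ, lam, h1, h2, heq⟩ := hdC
    exact hNotKKT ⟨d, hd, μ, lam, h1, h2, by rw [add_assoc, ← heq]; abel⟩
  obtain ⟨φ, a, b, hφs, hab, hφt⟩ :=
    geometric_hahn_banach_compact_closed hhullconv hhullcompact hCconv.neg hClosed.neg hdisj
  have hb0 : b < 0 := by
    have := hφt 0 (by rw [Set.mem_neg]; simpa using hCzero)
    simpa using this
  have hφC : ∀ w ∈ C, φ w ≤ 0 := by
    intro w hw
    by_contra h
    push_neg at h
    have hlt : ∀ w' ∈ C, φ w' < -b := by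
      intro w' hw'
      have := hφt (-w') (by rw [Set.mem_neg, neg_neg]; exact hw')
      rw [map_neg] at this
      linarith
    have hr : (0:ℝ) < (1 - b)/φ w := div_pos (by linarith) h
    have := hlt _ (hCcone _ hr.le w hw)
    rw [_root_.map_smul, smul_eq_mul, div_mul_cancel₀ _ (ne_of_gt h)] at this
    linarith
  -- the vector u
  refine ⟨fun i => φ (Pi.single i 1), ?_, ?_, ?_⟩
  all_goals
    have hdot : ∀ y : Fin n → ℝ, (fun i => φ (Pi.single i 1)) ⬝ᵥ y = φ y := by
      intro y
      have hy : φ y = ∑ i, y i * φ (Pi.single i 1) := by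
        conv_lhs => rw [aux_wrep y]
        rw [map_sum]
        exact Finset.sum_congr rfl fun i _ => by rw [_root_.map_smul, smul_eq_mul]
      have hL : (fun i => φ (Pi.single i 1)) ⬝ᵥ y = ∑ i, φ (Pi.single i 1) * y i := rfl
      rw [hL, hy]
      exact Finset.sum_congr rfl fun i _ => mul_comm _ _
  · -- gradient of c
    intro i
    have hmem : ∀ μ : Fin m → ℝ, (∑ i', μ i' • gradVec (fun y => c y i') x) ∈ C :=
      fun μ => ⟨μ, 0, fun j _ => rfl, fun j => le_refl 0, by simp⟩
    have hrep : gradVec (fun y => c y i) x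
        = ∑ i', (Pi.single i 1 : Fin m → ℝ) i' • gradVec (fun y => c y i') x := by
      rw [Finset.sum_eq_single i]
      · simp
      · intro b' _ hb'; simp [Pi.single_apply, hb']
      · intro h; exact absurd (Finset.mem_univ i) h
    have hneg : -gradVec (fun y => c y i) x
        = ∑ i', (-(Pi.single i 1) : Fin m → ℝ) i' • gradVec (fun y => c y i') x := by
      conv_lhs => rw [hrep]
      rw [← Finset.sum_neg_distrib]
      exact Finset.sum_congr rfl fun i' _ => by simp [neg_smul]
    have h1 : φ (gradVec (fun y => c y i) x) ≤ 0 := hφC _ (hrep ▸ hmem (Pi.single i 1))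
    have h2 : φ (-gradVec (fun y => c y i) x) ≤ 0 := hφC _ (hneg ▸ hmem (-Pi.single i 1))
    rw [map_neg] at h2
    rw [dotProduct_comm, hdot]
    linarith
  · -- gradients of g on J
    intro j hj
    have hrep : gradVec (fun y => g y j) x
        = (∑ i, (0:Fin m → ℝ) i • gradVec (fun y => c y i) x)
          + ∑ j', (Pi.single j 1 : Fin k → ℝ) j' • gradVec (fun y => g y j') x := by
      rw [Finset.sum_eq_single j (fun b' _ hb' => by simp [Pi.single_apply, hb'])
        (fun h => absurd (Finset.mem_univ j) h)]
      simp
    have hmem : gradVec (fun y => g y j) x ∈ C := by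
      refine ⟨0, Pi.single j 1, fun j' hj' => ?_, fun j' => ?_, hrep⟩
      · have : j' ≠ j := fun h => hj' (h ▸ hj)
        simp [Pi.single_eq_of_ne this]
      · rcases eq_or_ne j' j with rfl | h
        · simp
        · simp [Pi.single_eq_of_ne h]
    rw [hdot]
    exact hφC _ hmem
  · -- clarke subdifferential
    intro d hd
    rw [hdot]
    have := hφs d hd
    linarith
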